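/- Let g = so(3) × (Fin 3 → ℝ) be the product of the Lie algebra of real skew-symmetric 3×3 matrices with the three-dimensional abelian Lie algebra, and let μ be the skew-symmetric bilinear bracket on ℝ⁶ = (Fin 6 → ℝ) (standard basis e₁,…,e₆) determined by μ(e₁,e₂) = e₆, μ(e₁,e₃) = e₄, μ(e₂,e₃) = −e₅ and all other basis brackets zero (the nilpotent Lie algebra A_{6,3}). Then A_{6,3} is a contraction of so(3) ⊕ 3L₁: there exists a family φ : ℝ → ((Fin 6 → ℝ) ≃ₗ[ℝ] g) of linear equivalences such that for all x, y ∈ Fin 6 → ℝ, (φ t).symm ⁅φ t x, φ t y⁆ converges to μ(x, y) as t → +∞. -/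

import Mathlib

section ProdLie

variable (L M : Type*) [LieRing L] [LieRing M]

/-- The product of two Lie rings, with componentwise bracket. -/
instance Prod.instLieRing : LieRing (L × M) where
  bracket p q := (⁅p.1, q.1⁆, ⁅p.2, q.2⁆)
  add_lie x y z := by
    show (⁅(x+y).1, z.1⁆, ⁅(x+y).2, z.2⁆) = (⁅x.1,z.1⁆, ⁅x.2,z.2⁆) + (⁅y.1,z.1⁆, ⁅y.2,z.2⁆)
    simp only [Prod.fst_add, Prod.snd_add, Prod.mk_add_mk, Prod.mk.injEq]
    exact ⟨add_lie .., add_lie ..⟩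
  lie_add x y z := by
    show (⁅x.1, (y+z).1⁆, ⁅x.2, (y+z).2⁆) = (⁅x.1,y.1⁆, ⁅x.2,y.2⁆) + (⁅x.1,z.1⁆, ⁅x.2,z.2⁆)
    simp only [Prod.fst_add, Prod.snd_add, Prod.mk_add_mk, Prod.mk.injEq]
    exact ⟨lie_add .., lie_add ..⟩
  lie_self x := by
    show (⁅x.1, x.1⁆, ⁅x.2, x.2⁆) = (0 : L × M)
    simp
  leibniz_lie x y z := by
    show (⁅x.1, ⁅y.1,z.1⁆⁆, ⁅x.2, ⁅y.2,z.2⁆⁆)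
      = (⁅⁅x.1,y.1⁆, z.1⁆, ⁅⁅x.2,y.2⁆, z.2⁆) + (⁅y.1, ⁅x.1,z.1⁆⁆, ⁅y.2, ⁅x.2,z.2⁆⁆)
    simp only [Prod.mk_add_mk, Prod.mk.injEq]
    exact ⟨leibniz_lie .., leibniz_lie ..⟩

variable (R : Type*) [CommRing R] [LieAlgebra R L] [LieAlgebra R M]

/-- The product of two Lie algebras, with componentwise bracket. -/
instance Prod.instLieAlgebra : LieAlgebra R (L × M) where
  lie_smul t x y := by
    show (⁅x.1, (t • y).1⁆, ⁅x.2, (t • y).2⁆) = t • (⁅x.1,y.1⁆, ⁅x.2,y.2⁆)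
    simp

@[simp] theorem Prod.bracket_def (p q : L × M) : ⁅p, q⁆ = (⁅p.1, q.1⁆, ⁅p.2, q.2⁆) := rfl

end ProdLie

/-- `Fin 3 → ℝ` regarded as the three-dimensional abelian Lie algebra `3L₁`. -/
instance : LieRing (Fin 3 → ℝ) where
  bracket _ _ := 0
  add_lie _ _ _ := by simp
  lie_add _ _ _ := by simp
  lie_self _ := rfl
  leibniz_lie _ _ _ := by simp

noncomputable instance : LieAlgebra ℝ (Fin 3 → ℝ) where
  lie_smul t x y := by
    show (0 : Fin 3 → ℝ) = t • (0 : Fin 3 → ℝ)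
    simp

attribute [local instance 100] LieRing.ofAssociativeRing

open Matrix in
/-- The Lie algebra `so(3)` of real skew-symmetric `3 × 3` matrices, as a Lie subalgebra of the
matrix Lie algebra with the commutator bracket. -/
def so3 : LieSubalgebra ℝ (Matrix (Fin 3) (Fin 3) ℝ) where
  carrier := {A | Aᵀ = -A}
  add_mem' := by
    intro A B hA hB
    simp only [Set.mem_setOf_eq] at *
    rw [Matrix.transpose_add, hA, hB, neg_add]
  zero_mem' := by simp
  smul_mem' := by
    intro c A hA
    simp only [Set.mem_setOf_eq] at *
    rw [Matrix.transpose_smul, hA, smul_neg]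
  lie_mem' := by
    intro A B hA hB
    simp only [Set.mem_setOf_eq] at *
    rw [Ring.lie_def, Matrix.transpose_sub, Matrix.transpose_mul, Matrix.transpose_mul, hA, hB,
      neg_mul_neg, neg_mul_neg, neg_sub]

open Matrix Filter

@[simp] lemma cv5 {α : Type*} (a₀ a₁ a₂ a₃ a₄ a₅ : α) :
    ![a₀, a₁, a₂, a₃, a₄, a₅] 5 = a₅ := rfl

noncomputable def hat (w : Fin 3 → ℝ) : Matrix (Fin 3) (Fin 3) ℝ :=
  !![0, -w 2, w 1; w 2, 0, -w 0; -w 1, w 0, 0]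

lemma hat_mem (w : Fin 3 → ℝ) : hat w ∈ so3 := by
  show (hat w)ᵀ = -(hat w)
  ext i j
  fin_cases i <;> fin_cases j <;> simp [hat]

noncomputable def Phi : (Fin 6 → ℝ) ≃ₗ[ℝ] (so3 × (Fin 3 → ℝ)) where
  toFun x := (⟨hat ![x 0, x 1, x 2], hat_mem _⟩, ![x 3, x 4, x 5])
  invFun p := ![(p.1 : Matrix (Fin 3) (Fin 3) ℝ) 2 1, (p.1 : Matrix (Fin 3) (Fin 3) ℝ) 0 2,
    (p.1 : Matrix (Fin 3) (Fin 3) ℝ) 1 0, p.2 0, p.2 1, p.2 2]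
  map_add' x y := by
    refine Prod.ext (Subtype.ext ?_) ?_
    · show hat _ = _
      ext i j
      fin_cases i <;> fin_cases j <;>
        simp [hat, AddMemClass.coe_add, Matrix.add_apply] <;> ring
    · funext i; fin_cases i <;> simp
  map_smul' c x := by
    refine Prod.ext (Subtype.ext ?_) ?_
    · show hat _ = c • hat _
      ext i j
      fin_cases i <;> fin_cases j <;>
        simp [hat, Matrix.smul_apply, smul_eq_mul] <;> ring
    · funext i; fin_cases i <;> simp
  left_inv x := by
    funext i; fin_cases i <;> simp [hat]
  right_inv p := by
    obtain ⟨⟨A, hA⟩, v⟩ := p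
    have h : ∀ i j, A j i = - A i j := fun i j => by
      have := congrFun (congrFun (hA : Aᵀ = -A) i) j
      simpa [Matrix.transpose_apply, Matrix.neg_apply] using this
    refine Prod.ext (Subtype.ext ?_) ?_
    · show hat _ = A
      ext i j
      fin_cases i <;> fin_cases j <;>
        simp [hat] <;>
        linarith [h 0 0, h 0 1, h 0 2, h 1 0, h 1 1, h 1 2, h 2 0, h 2 1, h 2 2]
    · funext i; fin_cases i <;> simp

noncomputable def Psi (u : ℝ) (hu : u ≠ 0) : (Fin 6 → ℝ) ≃ₗ[ℝ] (Fin 6 → ℝ) where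
  toFun x := ![u⁻¹ * x 0, u⁻¹ * x 1, u⁻¹ * x 2,
               u^2 * x 1 + u * x 3, u^2 * x 0 + u * x 4, -(u^2) * x 2 + u * x 5]
  invFun z := ![u * z 0, u * z 1, u * z 2,
                u⁻¹ * z 3 - u^2 * z 1, u⁻¹ * z 4 - u^2 * z 0, u⁻¹ * z 5 + u^2 * z 2]
  map_add' x y := by funext i; fin_cases i <;> simp <;> ring
  map_smul' c x := by funext i; fin_cases i <;> simp <;> ring
  left_inv x := by funext i; fin_cases i <;> simp <;> field_simp <;> ring
  right_inv z := by funext i; fin_cases i <;> simp <;> field_simp <;> ring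


lemma key (u : ℝ) (hu : u ≠ 0) (x y : Fin 6 → ℝ) :
    ⁅((Psi u hu).trans Phi) x, ((Psi u hu).trans Phi) y⁆ =
    ((Psi u hu).trans Phi)
      ![u⁻¹ * (x 1 * y 2 - x 2 * y 1), u⁻¹ * (x 2 * y 0 - x 0 * y 2),
        u⁻¹ * (x 0 * y 1 - x 1 * y 0),
        x 0 * y 2 - x 2 * y 0, x 2 * y 1 - x 1 * y 2, x 0 * y 1 - x 1 * y 0] := by
  refine Prod.ext (Subtype.ext ?_) ?_
  · show (hat ![u⁻¹ * x 0, u⁻¹ * x 1, u⁻¹ * x 2] * hat ![u⁻¹ * y 0, u⁻¹ * y 1, u⁻¹ * y 2]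
        - hat ![u⁻¹ * y 0, u⁻¹ * y 1, u⁻¹ * y 2] * hat ![u⁻¹ * x 0, u⁻¹ * x 1, u⁻¹ * x 2])
      = hat ![u⁻¹ * (u⁻¹ * (x 1 * y 2 - x 2 * y 1)), u⁻¹ * (u⁻¹ * (x 2 * y 0 - x 0 * y 2)),
          u⁻¹ * (u⁻¹ * (x 0 * y 1 - x 1 * y 0))]
    ext i j
    fin_cases i <;> fin_cases j <;>
      simp [hat, Matrix.mul_apply, Fin.sum_univ_three, Matrix.sub_apply] <;> ring
  · show (0 : Fin 3 → ℝ) = ![u^2 * (u⁻¹ * (x 2 * y 0 - x 0 * y 2)) + u * (x 0 * y 2 - x 2 * y 0),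
        u^2 * (u⁻¹ * (x 1 * y 2 - x 2 * y 1)) + u * (x 2 * y 1 - x 1 * y 2),
        -(u^2) * (u⁻¹ * (x 0 * y 1 - x 1 * y 0)) + u * (x 0 * y 1 - x 1 * y 0)]
    funext i
    fin_cases i <;> simp <;> field_simp <;> ring

open Filter in
/-- The nilpotent Lie algebra `A_{6,3}`, given on `ℝ⁶` (standard basis
`e₁, …, e₆`) by `μ(e₁,e₂) = e₆`, `μ(e₁,e₃) = e₄`, `μ(e₂,e₃) = −e₅` and all other basis
brackets zero, is a contraction of the reductive Lie algebra `so(3) ⊕ 3L₁`. -/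
theorem A63_is_contraction_of_so3_sum_3L1
    (e : Fin 6 → (Fin 6 → ℝ)) (he : ∀ i, e i = Pi.single i 1)
    (μ : (Fin 6 → ℝ) →ₗ[ℝ] (Fin 6 → ℝ) →ₗ[ℝ] (Fin 6 → ℝ))
    (hskew : ∀ x y, μ x y = - μ y x)
    (h12 : μ (e 0) (e 1) = e 5)
    (h13 : μ (e 0) (e 2) = e 3)
    (h23 : μ (e 1) (e 2) = - e 4)
    (h14 : μ (e 0) (e 3) = 0) (h15 : μ (e 0) (e 4) = 0) (h16 : μ (e 0) (e 5) = 0)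
    (h24 : μ (e 1) (e 3) = 0) (h25 : μ (e 1) (e 4) = 0) (h26 : μ (e 1) (e 5) = 0)
    (h34 : μ (e 2) (e 3) = 0) (h35 : μ (e 2) (e 4) = 0) (h36 : μ (e 2) (e 5) = 0)
    (h45 : μ (e 3) (e 4) = 0) (h46 : μ (e 3) (e 5) = 0) (h56 : μ (e 4) (e 5) = 0) :
    ∃ φ : ℝ → ((Fin 6 → ℝ) ≃ₗ[ℝ] (so3 × (Fin 3 → ℝ))),
      ∀ x y : Fin 6 → ℝ,
        Tendsto (fun t => (φ t).symm ⁅φ t x, φ t y⁆) atTop (nhds (μ x y)) := by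
  classical
  have hbasis : ∀ i : Fin 6, e i = fun j => if i = j then (1:ℝ) else 0 := by
    intro i; rw [he i]; funext j; simp [Pi.single_apply, eq_comm]
  have hdiag : ∀ z, μ z z = 0 := by
    intro z; funext j
    have := congrFun (hskew z z) j
    simp only [Pi.neg_apply, Pi.zero_apply] at this ⊢
    linarith
  have l21 : μ (e 1) (e 0) = -(e 5) := by rw [hskew, h12]
  have l31 : μ (e 2) (e 0) = -(e 3) := by rw [hskew, h13]
  have l32 : μ (e 2) (e 1) = e 4 := by rw [hskew, h23, neg_neg]
  have l41 : μ (e 3) (e 0) = 0 := by rw [hskew, h14, neg_zero]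
  have l51 : μ (e 4) (e 0) = 0 := by rw [hskew, h15, neg_zero]
  have l61 : μ (e 5) (e 0) = 0 := by rw [hskew, h16, neg_zero]
  have l42 : μ (e 3) (e 1) = 0 := by rw [hskew, h24, neg_zero]
  have l52 : μ (e 4) (e 1) = 0 := by rw [hskew, h25, neg_zero]
  have l62 : μ (e 5) (e 1) = 0 := by rw [hskew, h26, neg_zero]
  have l43 : μ (e 3) (e 2) = 0 := by rw [hskew, h34, neg_zero]
  have l53 : μ (e 4) (e 2) = 0 := by rw [hskew, h35, neg_zero]
  have l63 : μ (e 5) (e 2) = 0 := by rw [hskew, h36, neg_zero]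
  have l54 : μ (e 4) (e 3) = 0 := by rw [hskew, h45, neg_zero]
  have l64 : μ (e 5) (e 3) = 0 := by rw [hskew, h46, neg_zero]
  have l65 : μ (e 5) (e 4) = 0 := by rw [hskew, h56, neg_zero]
  have hμ : ∀ x y : Fin 6 → ℝ, μ x y =
      ![0, 0, 0, x 0 * y 2 - x 2 * y 0, x 2 * y 1 - x 1 * y 2, x 0 * y 1 - x 1 * y 0] := by
    intro x y
    have hx : x = ∑ i, x i • e i := by
      simp_rw [hbasis]; exact pi_eq_sum_univ x
    have hy : y = ∑ i, y i • e i := by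
      simp_rw [hbasis]; exact pi_eq_sum_univ y
    have expand : μ x y = ∑ i : Fin 6, x i • μ (e i) y := by
      conv_lhs => rw [hx]
      rw [map_sum, LinearMap.sum_apply]
      simp only [_root_.map_smul, LinearMap.smul_apply]
    have expand2 : ∀ i, μ (e i) y = ∑ j : Fin 6, y j • μ (e i) (e j) := by
      intro i
      conv_lhs => rw [hy]
      rw [map_sum]
      simp only [_root_.map_smul]
    rw [expand]
    simp_rw [expand2]
    simp only [Fin.sum_univ_six, h12, h13, h23, h14, h15, h16, h24, h25, h26, h34, h35, h36,
      h45, h46, h56, l21, l31, l32, l41, l51, l61, l42, l52, l62, l43, l53, l63,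
      l54, l64, l65, hdiag, smul_zero, zero_add, add_zero, smul_neg]
    funext j
    fin_cases j <;>
      simp [hbasis, Pi.smul_apply, Pi.add_apply, Pi.neg_apply, smul_eq_mul] <;> ring
  have hs : ∀ t : ℝ, (0:ℝ) < Real.sqrt (1 + t^2) := fun t => Real.sqrt_pos.mpr (by positivity)
  have hne : ∀ t : ℝ, Real.sqrt (1 + t^2) ≠ 0 := fun t => (hs t).ne'
  refine ⟨fun t => (Psi (Real.sqrt (1 + t^2)) (hne t)).trans Phi, fun x y => ?_⟩
  have hval : ∀ t : ℝ,
      ((Psi (Real.sqrt (1 + t^2)) (hne t)).trans Phi).symm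
        ⁅((Psi (Real.sqrt (1 + t^2)) (hne t)).trans Phi) x,
         ((Psi (Real.sqrt (1 + t^2)) (hne t)).trans Phi) y⁆
      = ![(Real.sqrt (1 + t^2))⁻¹ * (x 1 * y 2 - x 2 * y 1),
          (Real.sqrt (1 + t^2))⁻¹ * (x 2 * y 0 - x 0 * y 2),
          (Real.sqrt (1 + t^2))⁻¹ * (x 0 * y 1 - x 1 * y 0),
          x 0 * y 2 - x 2 * y 0, x 2 * y 1 - x 1 * y 2, x 0 * y 1 - x 1 * y 0] := fun t => by
    rw [key, LinearEquiv.symm_apply_apply]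
  have hU : Tendsto (fun t : ℝ => Real.sqrt (1 + t^2)) atTop atTop := by
    refine tendsto_atTop_mono (fun t => ?_) tendsto_id
    rcases le_total t 0 with h | h
    · exact h.trans (Real.sqrt_nonneg _)
    · calc t = Real.sqrt (t^2) := (Real.sqrt_sq h).symm
        _ ≤ Real.sqrt (1 + t^2) := Real.sqrt_le_sqrt (by nlinarith)
  have hinv : Tendsto (fun t : ℝ => (Real.sqrt (1 + t^2))⁻¹) atTop (nhds 0) :=
    tendsto_inv_atTop_zero.comp hU
  rw [hμ x y]
  simp only [hval]
  rw [tendsto_pi_nhds]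
  intro j
  fin_cases j <;>
    simp only [Matrix.cons_val_zero, Matrix.cons_val_one, Matrix.head_cons,
      Matrix.cons_val_two, Matrix.cons_val_three, Matrix.cons_val_four, Matrix.tail_cons, cv5,
      Matrix.cons_val_fin_one, Fin.isValue]
  · simpa using hinv.mul_const (x 1 * y 2 - x 2 * y 1)
  · simpa using hinv.mul_const (x 2 * y 0 - x 0 * y 2)
  · simpa using hinv.mul_const (x 0 * y 1 - x 1 * y 0)
  · exact tendsto_const_nhds
  · exact tendsto_const_nhds
  · exact tendsto_const_nhds
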